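/- For 0 ≤ r < 1/6, lim_{N→∞} (1/N) log |J_N(E; exp(2πr√-1/N))| = 0, where J_N(E; t) = ∑_{k=0}^{N-1} ∏_{j=1}^k (t^{(N+j)/2} - t^{-(N+j)/2})(t^{(N-j)/2} - t^{-(N-j)/2}) is the colored Jones polynomial of the figure-eight knot. -/

import Mathlib

open Real

/-- The colored Jones polynomial of the figure-eight knot (Habiro–Le formula),
evaluated at `t = exp(2πr√-1/N)`. -/
noncomputable def JFigEight (r : ℝ) (N : ℕ) : ℂ :=
  ∑ k ∈ Finset.range N, ∏ j ∈ Finset.Icc 1 k,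
    ((Complex.exp ((↑(π * r * ((N : ℝ) + (j : ℝ)) / N)) * Complex.I) -
        Complex.exp (-((↑(π * r * ((N : ℝ) + (j : ℝ)) / N)) * Complex.I))) *
     (Complex.exp ((↑(π * r * ((N : ℝ) - (j : ℝ)) / N)) * Complex.I) -
        Complex.exp (-((↑(π * r * ((N : ℝ) - (j : ℝ)) / N)) * Complex.I))))

/-- The absolute value of one product factor, as a real number. -/
noncomputable def bFE (r : ℝ) (N j : ℕ) : ℝ :=
  4 * Real.sin (π * r * ((N : ℝ) + (j : ℝ)) / N) * Real.sin (π * r * ((N : ℝ) - (j : ℝ)) / N)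

/-- A clamped version of `bFE`, lying in `[0, 2 - 2cos(2πr)]` unconditionally. -/
noncomputable def bFEc (r : ℝ) (N j : ℕ) : ℝ :=
  min (max (bFE r N j) 0) (2 - 2 * Real.cos (2 * π * r))

lemma exp_sub_exp_neg (θ : ℝ) :
    Complex.exp (↑θ * Complex.I) - Complex.exp (-(↑θ * Complex.I)) =
      ((2 * Real.sin θ : ℝ) : ℂ) * Complex.I := by
  rw [show -((θ : ℂ) * Complex.I) = (↑(-θ) * Complex.I) by push_cast; ring]
  rw [Complex.exp_mul_I, Complex.exp_mul_I]
  push_cast [← Complex.ofReal_sin, ← Complex.ofReal_cos]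
  ring_nf
  simp [Complex.cos_neg, Complex.sin_neg]
  ring

lemma bFE_nonneg {r : ℝ} (h1 : 0 ≤ r) (h2 : r < 1 / 6) {N j : ℕ} (hN : 1 ≤ N)
    (hj : j ≤ N) : 0 ≤ bFE r N j := by
  have hNpos : (0 : ℝ) < N := by exact_mod_cast hN
  have hjN : (j : ℝ) ≤ N := by exact_mod_cast hj
  have hπ := Real.pi_pos
  have ha0 : 0 ≤ π * r * ((N : ℝ) + j) / N := by positivity
  have ha1 : π * r * ((N : ℝ) + j) / N ≤ π := by
    rw [div_le_iff₀ hNpos]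
    have hr : r * ((N : ℝ) + j) ≤ (N : ℝ) := by nlinarith
    nlinarith [mul_le_mul_of_nonneg_left hr hπ.le]
  have hb0 : 0 ≤ π * r * ((N : ℝ) - j) / N := by
    apply div_nonneg _ hNpos.le
    apply mul_nonneg (by positivity) (by linarith)
  have hb1 : π * r * ((N : ℝ) - j) / N ≤ π := by
    rw [div_le_iff₀ hNpos]
    have hr : r * ((N : ℝ) - j) ≤ (N : ℝ) := by nlinarith
    nlinarith [mul_le_mul_of_nonneg_left hr hπ.le]
  have := Real.sin_nonneg_of_nonneg_of_le_pi ha0 ha1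
  have := Real.sin_nonneg_of_nonneg_of_le_pi hb0 hb1
  unfold bFE; positivity

lemma bFE_le {r : ℝ} {N j : ℕ} (hN : 1 ≤ N) :
    bFE r N j ≤ 2 - 2 * Real.cos (2 * π * r) := by
  have hNpos : (0 : ℝ) < N := by exact_mod_cast hN
  set a := π * r * ((N : ℝ) + j) / N with ha
  set b := π * r * ((N : ℝ) - j) / N with hb
  have hab : a + b = 2 * π * r := by
    rw [ha, hb]; field_simp; ring
  have h1 := Real.cos_sub a b
  have h2 : Real.cos (2 * π * r) = Real.cos a * Real.cos b - Real.sin a * Real.sin b := by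
    rw [← hab, Real.cos_add]
  have hc : Real.cos (a - b) ≤ 1 := Real.cos_le_one _
  unfold bFE
  rw [← ha, ← hb]
  nlinarith [h1, h2, hc]

lemma altBounds (a : ℕ → ℝ) (C : ℝ) (h0 : a 0 = 1) (hnn : ∀ k, 0 ≤ a k)
    (hdec : ∀ k, a (k + 1) ≤ a k) (hC : a 1 ≤ C) (N : ℕ) (hN : 1 ≤ N) :
    1 - C ≤ ∑ k ∈ Finset.range N, (-1 : ℝ) ^ k * a k ∧
      ∑ k ∈ Finset.range N, (-1 : ℝ) ^ k * a k ≤ 1 := by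
  set S : ℕ → ℝ := fun n => ∑ k ∈ Finset.range n, (-1 : ℝ) ^ k * a k with hS
  have hsucc : ∀ n, S (n + 1) = S n + (-1 : ℝ) ^ n * a n := by
    intro n; simp [hS, Finset.sum_range_succ]
  have hpow : ∀ m : ℕ, ((-1 : ℝ) ^ (2 * m) = 1) ∧ ((-1 : ℝ) ^ (2 * m + 1) = -1) := by
    intro m
    constructor
    · exact Even.neg_one_pow ⟨m, by ring⟩
    · exact Odd.neg_one_pow ⟨m, by ring⟩
  have key : ∀ m : ℕ, S (2 * m + 1) ≤ 1 ∧ 1 - C ≤ S (2 * m + 2) := by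
    intro m
    induction m with
    | zero =>
      constructor
      · have : S 1 = 1 := by simp [hS, h0]
        linarith
      · have : S 2 = 1 - a 1 := by
          simp [hS, Finset.sum_range_succ, h0]; ring
        linarith
    | succ m ih =>
      have e1 : S (2 * (m + 1) + 1) = S (2 * m + 1) - a (2 * m + 1) + a (2 * m + 2) := by
        have : 2 * (m + 1) + 1 = (2 * m + 1) + 1 + 1 := by ring
        rw [this, hsucc, hsucc, (hpow m).2,
          show (-1 : ℝ) ^ (2 * m + 1 + 1) = 1 from Even.neg_one_pow ⟨m + 1, by ring⟩]
        ring
      have e2 : S (2 * (m + 1) + 2) = S (2 * m + 2) + a (2 * m + 2) - a (2 * m + 3) := by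
        have : 2 * (m + 1) + 2 = (2 * m + 2) + 1 + 1 := by ring
        rw [this, hsucc, hsucc,
          show (-1 : ℝ) ^ (2 * m + 2) = 1 from Even.neg_one_pow ⟨m + 1, by ring⟩,
          show (-1 : ℝ) ^ (2 * m + 2 + 1) = -1 from Odd.neg_one_pow ⟨m + 1, by ring⟩]
        ring
      constructor
      · rw [e1]
        have := hdec (2 * m + 1)
        linarith [ih.1]
      · rw [e2]
        have := hdec (2 * m + 2)
        linarith [ih.2]
  rcases Nat.even_or_odd N with hpar | hpar
  · obtain ⟨m, rfl⟩ : ∃ m, N = 2 * m + 2 := by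
      rcases hpar with ⟨m, hm⟩; exact ⟨m - 1, by omega⟩
    have e : S (2 * m + 2) = S (2 * m + 1) - a (2 * m + 1) := by
      rw [hsucc, (hpow m).2]; ring
    refine ⟨(key m).2, ?_⟩
    show S (2 * m + 2) ≤ 1
    rw [e]
    linarith [(key m).1, hnn (2 * m + 1)]
  · obtain ⟨m, rfl⟩ : ∃ m, N = 2 * m + 1 := by
      rcases hpar with ⟨m, hm⟩; exact ⟨m, by omega⟩
    have e : S (2 * m + 2) = S (2 * m + 1) - a (2 * m + 1) := by
      rw [hsucc, (hpow m).2]; ring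
    refine ⟨?_, (key m).1⟩
    show 1 - C ≤ S (2 * m + 1)
    have := (key m).2
    rw [e] at this
    linarith [hnn (2 * m + 1)]

lemma JFigEight_eq_real (r : ℝ) (N : ℕ) :
    JFigEight r N = ((∑ k ∈ Finset.range N, ∏ j ∈ Finset.Icc 1 k, (-(bFE r N j)) : ℝ) : ℂ) := by
  unfold JFigEight
  calc (∑ k ∈ Finset.range N, ∏ j ∈ Finset.Icc 1 k,
    ((Complex.exp ((↑(π * r * ((N : ℝ) + (j : ℝ)) / N)) * Complex.I) -
        Complex.exp (-((↑(π * r * ((N : ℝ) + (j : ℝ)) / N)) * Complex.I))) *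
     (Complex.exp ((↑(π * r * ((N : ℝ) - (j : ℝ)) / N)) * Complex.I) -
        Complex.exp (-((↑(π * r * ((N : ℝ) - (j : ℝ)) / N)) * Complex.I)))))
      = ∑ k ∈ Finset.range N, ∏ j ∈ Finset.Icc 1 k, ((-(bFE r N j) : ℝ) : ℂ) := by
        refine Finset.sum_congr rfl fun k _ => Finset.prod_congr rfl fun j _ => ?_
        rw [exp_sub_exp_neg, exp_sub_exp_neg]
        unfold bFE
        push_cast
        ring_nf
        rw [Complex.I_sq]
        ring
    _ = _ := by push_cast; rfl

theorem stmt12 (r : ℝ) (h1 : 0 ≤ r) (h2 : r < 1 / 6) :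
    Filter.Tendsto (fun N : ℕ => Real.log ‖JFigEight r N‖ / N)
      Filter.atTop (nhds 0) := by
  have hπ := Real.pi_pos
  set C : ℝ := 2 - 2 * Real.cos (2 * π * r) with hCdef
  have hC0 : 0 ≤ C := by
    have := Real.cos_le_one (2 * π * r)
    rw [hCdef]; linarith
  have hC1 : C < 1 := by
    have hh : Real.cos (π / 3) < Real.cos (2 * π * r) := by
      apply Real.cos_lt_cos_of_nonneg_of_le_pi (by positivity) (by linarith)
      nlinarith
    rw [Real.cos_pi_div_three] at hh
    rw [hCdef]; linarith
  -- bounds on the real sum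
  have hSbound : ∀ N : ℕ, 1 ≤ N →
      1 - C ≤ (∑ k ∈ Finset.range N, ∏ j ∈ Finset.Icc 1 k, (-(bFE r N j)) : ℝ) ∧
      (∑ k ∈ Finset.range N, ∏ j ∈ Finset.Icc 1 k, (-(bFE r N j)) : ℝ) ≤ 1 := by
    intro N hN
    have hBc0 : ∀ j, 0 ≤ bFEc r N j := by
      intro j
      exact le_min (le_max_right _ _) hC0
    have hBcC : ∀ j, bFEc r N j ≤ C := fun j => min_le_right _ _
    set a : ℕ → ℝ := fun k => ∏ j ∈ Finset.Icc 1 k, bFEc r N j with ha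
    have h0 : a 0 = 1 := by simp [ha]
    have hnn : ∀ k, 0 ≤ a k := fun k => Finset.prod_nonneg fun j _ => hBc0 j
    have hdec : ∀ k, a (k + 1) ≤ a k := by
      intro k
      have : a (k + 1) = a k * bFEc r N (k + 1) :=
        Finset.prod_Icc_succ_top (by omega) _
      rw [this]
      calc a k * bFEc r N (k + 1) ≤ a k * 1 :=
            mul_le_mul_of_nonneg_left (le_trans (hBcC _) hC1.le) (hnn k)
        _ = a k := mul_one _
    have hCa : a 1 ≤ C := by
      have : a 1 = bFEc r N 1 := by simp [ha]
      rw [this]; exact hBcC 1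
    have heq : (∑ k ∈ Finset.range N, ∏ j ∈ Finset.Icc 1 k, (-(bFE r N j)) : ℝ) =
        ∑ k ∈ Finset.range N, (-1 : ℝ) ^ k * a k := by
      refine Finset.sum_congr rfl fun k hk => ?_
      have hkN : k < N := Finset.mem_range.mp hk
      have hprod : ∏ j ∈ Finset.Icc 1 k, (-(bFE r N j)) =
          (-1 : ℝ) ^ k * ∏ j ∈ Finset.Icc 1 k, bFE r N j := by
        rw [show (fun j => -(bFE r N j)) = (fun j => (-1 : ℝ) * bFE r N j) from by
          funext j; ring]
        rw [Finset.prod_mul_distrib, Finset.prod_const, Nat.card_Icc]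
        simp
      rw [hprod]
      congr 1
      show (∏ j ∈ Finset.Icc 1 k, bFE r N j) = ∏ j ∈ Finset.Icc 1 k, bFEc r N j
      refine Finset.prod_congr rfl fun j hj => ?_
      have hj' : j ≤ N := by
        have := (Finset.mem_Icc.mp hj).2; omega
      have hb0 := bFE_nonneg h1 h2 (by omega) hj'
      have hbC := bFE_le (r := r) (N := N) (j := j) (by omega)
      rw [bFEc, max_eq_left hb0, min_eq_left hbC]
    rw [heq]
    exact altBounds a C h0 hnn hdec hCa N hN
  -- squeeze
  have hD : 0 ≤ -Real.log (1 - C) := by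
    have : Real.log (1 - C) ≤ Real.log 1 := Real.log_le_log (by linarith) (by linarith)
    simp at this; linarith
  apply squeeze_zero_norm' (a := fun N : ℕ => (-Real.log (1 - C)) / N)
  · filter_upwards [Filter.eventually_ge_atTop 1] with N hN
    obtain ⟨hlo, hhi⟩ := hSbound N hN
    set S := (∑ k ∈ Finset.range N, ∏ j ∈ Finset.Icc 1 k, (-(bFE r N j)) : ℝ) with hSdef
    have hSpos : 0 < S := by linarith
    have habs : ‖JFigEight r N‖ = S := by
      rw [JFigEight_eq_real, Complex.norm_real, Real.norm_eq_abs, abs_of_pos hSpos]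
    rw [habs]
    have hlog_le : Real.log S ≤ 0 := by
      have := Real.log_le_log hSpos hhi
      simpa using this
    have hlog_ge : Real.log (1 - C) ≤ Real.log S := Real.log_le_log (by linarith) hlo
    have hNpos : (0 : ℝ) < N := by exact_mod_cast hN
    rw [Real.norm_eq_abs, abs_div, abs_of_pos hNpos]
    have hbound : |Real.log S| ≤ -Real.log (1 - C) := by
      rw [abs_of_nonpos hlog_le]; linarith
    gcongr
  · exact tendsto_const_div_atTop_nhds_zero_nat _
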